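/- There exist R > 0 and C > 0 such that for all z ∈ ℂ ∖ (−∞, 0] with |z| ≥ R, |g(z) − z^{1/2} − 𝔤₁ z^{−1/2}| ≤ C |z|^{−3/2}, where 𝔤₁ = 1/2 + (−1)^{k+1} λ^k c_1 / s^{k+1/2} and z^{1/2}, z^{−1/2} denote principal branches. -/

import Mathlib

open Complex Set

/-- The generalized binomial coefficient `C(1/2, n) = (1/2)(1/2−1)⋯(1/2−n+1)/n!`. -/
noncomputable def halfChoose (n : ℕ) : ℝ :=
  (∏ i ∈ Finset.range n, (1 / 2 - (i : ℝ))) / (Nat.factorial n)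

/-- The g-function `g(z) = (z+1)^{1/2} (1 + (−1)^{k+1} (λ^k/s^{k+1/2}) ∑_{j=1}^k c_j z^{−j})`,
with the principal branch of `(z+1)^{1/2}`. -/
noncomputable def gFun (k : ℕ) (lam s : ℝ) (c : ℕ → ℝ) (z : ℂ) : ℂ :=
  (z + 1) ^ ((1 : ℂ) / 2) *
    (1 + ((-1 : ℂ)) ^ (k + 1) * ((lam ^ k : ℝ) : ℂ) / ((s ^ ((k : ℝ) + 1 / 2) : ℝ) : ℂ) *
      ∑ j ∈ Finset.Icc 1 k, ((c j : ℝ) : ℂ) * z ^ (-(j : ℤ)))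

lemma sqrtAux_re_nonneg (w : ℂ) (hw : w ≠ 0) : 0 ≤ (w ^ ((1:ℂ)/2)).re := by
  rw [Complex.cpow_def_of_ne_zero hw, Complex.exp_re]
  have him : (Complex.log w * ((1:ℂ)/2)).im = w.arg / 2 := by
    simp [Complex.mul_im, Complex.log_im]
    ring
  rw [him]
  refine mul_nonneg (Real.exp_nonneg _) (Real.cos_nonneg_of_mem_Icc ?_)
  constructor
  · linarith [Complex.neg_pi_lt_arg w]
  · linarith [Complex.arg_le_pi w]

lemma sqrtAux_im_nonneg (w : ℂ) (hw : w ≠ 0) (h : 0 ≤ w.im) : 0 ≤ (w ^ ((1:ℂ)/2)).im := by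
  rw [Complex.cpow_def_of_ne_zero hw, Complex.exp_im]
  have him : (Complex.log w * ((1:ℂ)/2)).im = w.arg / 2 := by
    simp [Complex.mul_im, Complex.log_im]; ring
  rw [him]
  refine mul_nonneg (Real.exp_nonneg _) (Real.sin_nonneg_of_nonneg_of_le_pi ?_ ?_)
  · have := Complex.arg_nonneg_iff.2 h; linarith
  · linarith [Complex.arg_le_pi w, Real.pi_pos]

lemma sqrtAux_im_nonpos (w : ℂ) (hw : w ≠ 0) (h : w.im < 0) : (w ^ ((1:ℂ)/2)).im ≤ 0 := by
  rw [Complex.cpow_def_of_ne_zero hw, Complex.exp_im]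
  have him : (Complex.log w * ((1:ℂ)/2)).im = w.arg / 2 := by
    simp [Complex.mul_im, Complex.log_im]; ring
  rw [him]
  have harg : w.arg < 0 := Complex.arg_neg_iff.2 h
  have : Real.sin (w.arg / 2) ≤ 0 := by
    have : 0 ≤ Real.sin (-(w.arg / 2)) :=
      Real.sin_nonneg_of_nonneg_of_le_pi (by linarith) (by linarith [Complex.neg_pi_lt_arg w])
    rw [Real.sin_neg] at this; linarith
  exact mul_nonpos_of_nonneg_of_nonpos (Real.exp_nonneg _) this

set_option maxHeartbeats 2000000 in
/-- Large-`z` expansion `g(z) = z^{1/2} + 𝔤₁ z^{−1/2} + O(z^{−3/2})`. -/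
theorem gFun_asymptotics_at_infinity (k : ℕ) (hk : 1 ≤ k) (lam s : ℝ)
    (hlam : 0 < lam) (hs : 0 < s) (c : ℕ → ℝ) (hck : c k = 1)
    (hc : ∀ m, 1 ≤ m → m ≤ k - 1 →
      ∑ j ∈ Finset.range (m + 1), halfChoose (m - j) * c (k - j) = 0) :
    ∃ R > (0 : ℝ), ∃ C > (0 : ℝ), ∀ z : ℂ, ¬(z.im = 0 ∧ z.re ≤ 0) →
      R ≤ ‖z‖ →
      ‖gFun k lam s c z - z ^ ((1 : ℂ) / 2)
          - (((1 / 2 + (-1 : ℝ) ^ (k + 1) * lam ^ k * c 1 / s ^ ((k : ℝ) + 1 / 2) : ℝ)) : ℂ)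
            * z ^ (-(1 : ℂ) / 2)‖
        ≤ C * (‖z‖) ^ (-(3 : ℝ) / 2) := by
  classical
  set Ac : ℂ := ((-1 : ℂ)) ^ (k + 1) * ((lam ^ k : ℝ) : ℂ) / ((s ^ ((k : ℝ) + 1 / 2) : ℝ) : ℂ)
    with hAc
  set M : ℝ := ‖Ac‖ * ∑ j ∈ Finset.Icc 1 k, |c j| with hMdef
  have hM0 : 0 ≤ M :=
    mul_nonneg (norm_nonneg _) (Finset.sum_nonneg fun j _ => abs_nonneg _)
  refine ⟨2, by norm_num, 1 + 2 * M, by linarith, ?_⟩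
  intro z hz hR
  have habs0 : (0:ℝ) < ‖z‖ := by linarith
  have hz0 : z ≠ 0 := by
    intro h; rw [h] at habs0; simp at habs0
  have hz1 : z + 1 ≠ 0 := by
    intro h
    have hzm : z = -1 := by linear_combination h
    exact hz ⟨by simp [hzm], by simp [hzm]⟩
  set b : ℂ := z ^ ((1:ℂ)/2) with hbdef
  set a : ℂ := (z+1) ^ ((1:ℂ)/2) with hadef
  have hb2 : b * b = z := by
    rw [hbdef, ← Complex.cpow_add _ _ hz0]
    norm_num
  have ha2 : a * a = z + 1 := by
    rw [hadef, ← Complex.cpow_add _ _ hz1]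
    norm_num
  have hbne : b ≠ 0 := by
    intro h
    rw [h, mul_zero] at hb2
    exact hz0 hb2.symm
  set β : ℝ := ‖z‖ ^ ((1:ℝ)/2) with hβdef
  have hβb : ‖b‖ = β := by
    rw [hbdef, Complex.norm_cpow_of_ne_zero hz0]
    norm_num
    rw [hβdef]
  have hβ1 : 1 ≤ β := by
    have h := Real.rpow_le_rpow (by norm_num : (0:ℝ) ≤ 1) (by linarith : (1:ℝ) ≤ ‖z‖)
      (by norm_num : (0:ℝ) ≤ (1:ℝ)/2)
    rw [Real.one_rpow] at h
    exact h
  have hβ0 : (0:ℝ) < β := by linarith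
  have hβsq : β * β = ‖z‖ := by
    rw [hβdef, ← Real.rpow_add habs0]
    norm_num
  -- Re (a * conj b) ≥ 0
  have hre : 0 ≤ (a * (starRingEnd ℂ) b).re := by
    have hexp : (a * (starRingEnd ℂ) b).re = a.re * b.re + a.im * b.im := by
      simp [Complex.mul_re]
    rw [hexp]
    have h1 : 0 ≤ a.re := sqrtAux_re_nonneg _ hz1
    have h2 : 0 ≤ b.re := sqrtAux_re_nonneg _ hz0
    have h3 : 0 ≤ a.im * b.im := by
      rcases le_or_gt 0 z.im with him | him
      · exact mul_nonneg (sqrtAux_im_nonneg _ hz1 (by simpa using him))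
          (sqrtAux_im_nonneg _ hz0 him)
      · have ha' := sqrtAux_im_nonpos _ hz1 (by simpa using him)
        have hb' := sqrtAux_im_nonpos _ hz0 him
        nlinarith
    nlinarith
  have habβ : β ≤ ‖a + b‖ := by
    have h1 : β ^ 2 ≤ (‖a + b‖) ^ 2 := by
      rw [Complex.sq_norm, Complex.normSq_add]
      have hnb : Complex.normSq b = β ^ 2 := by
        rw [← Complex.sq_norm, hβb]
      nlinarith [Complex.normSq_nonneg a]
    nlinarith [norm_nonneg (a + b)]
  have habne : a + b ≠ 0 := by
    intro h
    rw [h] at habβ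
    simp at habβ
    linarith
  have hd : (a + b) * (a - b) = 1 := by
    have : (a + b) * (a - b) = a * a - b * b := by ring
    rw [this, ha2, hb2]; ring
  have heq1 : a - b = (a + b)⁻¹ := eq_inv_of_mul_eq_one_left (by linear_combination hd)
  have hY : (2 * b * (a + b) ^ 2) ≠ 0 := by
    refine mul_ne_zero (mul_ne_zero two_ne_zero hbne) (pow_ne_zero _ habne)
  have h2b : (2 * b) * (2 * b)⁻¹ = 1 := mul_inv_cancel₀ (mul_ne_zero two_ne_zero hbne)
  have hkey : (a - b - (2 * b)⁻¹) * (2 * b * (a + b) ^ 2) = -1 := by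
    linear_combination (2 * b * (a + b) - 1) * hd - ((a + b) ^ 2) * h2b
  have hT1 : a - b - (2 * b)⁻¹ = -(2 * b * (a + b) ^ 2)⁻¹ := by
    rw [(eq_div_iff hY).2 hkey]
    ring
  -- sums
  set T : ℂ := ∑ j ∈ Finset.Icc 1 k, ((c j : ℝ) : ℂ) * z ^ (-(j : ℤ)) with hTdef
  set T2 : ℂ := ∑ j ∈ Finset.Icc 2 k, ((c j : ℝ) : ℂ) * z ^ (-(j : ℤ)) with hT2def
  have herase : (Finset.Icc 1 k).erase 1 = Finset.Icc 2 k := by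
    rw [Finset.Icc_erase_left]
    exact (Finset.Icc_add_one_left_eq_Ioc 1 k).symm
  have hTsplit : T = ((c 1 : ℝ) : ℂ) * z⁻¹ + T2 := by
    rw [hTdef, ← Finset.add_sum_erase _ _ (Finset.mem_Icc.2 ⟨le_refl 1, hk⟩), herase, ← hT2def]
    norm_num
  have hg1 : (((1 / 2 + (-1 : ℝ) ^ (k + 1) * lam ^ k * c 1 / s ^ ((k : ℝ) + 1 / 2) : ℝ)) : ℂ)
      = 1/2 + Ac * ((c 1 : ℝ) : ℂ) := by
    rw [hAc]
    push_cast
    ring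
  have hzinv : z ^ (-(1:ℂ)/2) = b⁻¹ := by
    rw [show (-(1:ℂ)/2) = -((1:ℂ)/2) by ring, Complex.cpow_neg, hbdef]
  have hEiden : gFun k lam s c z - b
      - (((1 / 2 + (-1 : ℝ) ^ (k + 1) * lam ^ k * c 1 / s ^ ((k : ℝ) + 1 / 2) : ℝ)) : ℂ)
        * z ^ (-(1 : ℂ) / 2)
      = (a - b - (2 * b)⁻¹) + (a - b) * (Ac * T) + b * (Ac * T2) := by
    have hzz : z * z⁻¹ = 1 := mul_inv_cancel₀ hz0
    have hbb : b * b⁻¹ = 1 := mul_inv_cancel₀ hbne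
    simp only [gFun]
    rw [← hAc, ← hadef, ← hTdef, hzinv, hg1, hTsplit]
    linear_combination (Ac * ((c 1 : ℝ) : ℂ) * z⁻¹ * b⁻¹) * hb2
      + (Ac * ((c 1 : ℝ) : ℂ) * b⁻¹) * hzz - (Ac * ((c 1 : ℝ) : ℂ) * z⁻¹ * b) * hbb
  -- bounds for the sums
  have hzj1 : ∀ j : ℕ, j ∈ Finset.Icc 1 k →
      ‖((c j : ℝ) : ℂ) * z ^ (-(j : ℤ))‖ ≤ |c j| * (‖z‖)⁻¹ := by
    intro j hj
    have hj1 : 1 ≤ j := (Finset.mem_Icc.1 hj).1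
    rw [norm_mul, Complex.norm_real, Real.norm_eq_abs, norm_zpow, zpow_neg, zpow_natCast]
    have h1 : ‖z‖ ≤ ‖z‖ ^ j := le_self_pow₀ (by linarith) (by omega)
    gcongr
  have hzj2 : ∀ j : ℕ, j ∈ Finset.Icc 2 k →
      ‖((c j : ℝ) : ℂ) * z ^ (-(j : ℤ))‖ ≤ |c j| * ((‖z‖) ^ 2)⁻¹ := by
    intro j hj
    have hj2 : 2 ≤ j := (Finset.mem_Icc.1 hj).1
    rw [norm_mul, Complex.norm_real, Real.norm_eq_abs, norm_zpow, zpow_neg, zpow_natCast]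
    have h1 : ‖z‖ ^ 2 ≤ ‖z‖ ^ j := pow_le_pow_right₀ (by linarith) hj2
    gcongr
  have hTbound : ‖Ac * T‖ ≤ M * (‖z‖)⁻¹ := by
    rw [norm_mul, hMdef, mul_assoc]
    refine mul_le_mul_of_nonneg_left ?_ (norm_nonneg _)
    calc ‖T‖ ≤ ∑ j ∈ Finset.Icc 1 k, ‖((c j : ℝ) : ℂ) * z ^ (-(j : ℤ))‖ :=
          norm_sum_le _ _
      _ ≤ ∑ j ∈ Finset.Icc 1 k, |c j| * (‖z‖)⁻¹ := Finset.sum_le_sum hzj1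
      _ = (∑ j ∈ Finset.Icc 1 k, |c j|) * (‖z‖)⁻¹ := by rw [Finset.sum_mul]
  have hT2bound : ‖Ac * T2‖ ≤ M * ((‖z‖) ^ 2)⁻¹ := by
    rw [norm_mul, hMdef, mul_assoc]
    refine mul_le_mul_of_nonneg_left ?_ (norm_nonneg _)
    calc ‖T2‖ ≤ ∑ j ∈ Finset.Icc 2 k, ‖((c j : ℝ) : ℂ) * z ^ (-(j : ℤ))‖ :=
          norm_sum_le _ _
      _ ≤ ∑ j ∈ Finset.Icc 2 k, |c j| * ((‖z‖) ^ 2)⁻¹ := Finset.sum_le_sum hzj2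
      _ = (∑ j ∈ Finset.Icc 2 k, |c j|) * ((‖z‖) ^ 2)⁻¹ := by rw [Finset.sum_mul]
      _ ≤ (∑ j ∈ Finset.Icc 1 k, |c j|) * ((‖z‖) ^ 2)⁻¹ := by
          refine mul_le_mul_of_nonneg_right ?_ (by positivity)
          refine Finset.sum_le_sum_of_subset_of_nonneg ?_ (fun j _ _ => abs_nonneg _)
          exact Finset.Icc_subset_Icc_left (by norm_num)
  -- component bounds
  have hX : ‖a - b - (2 * b)⁻¹‖ ≤ (2 * β ^ 3)⁻¹ := by
    rw [hT1, norm_neg, norm_inv, norm_mul, norm_mul, norm_pow, Complex.norm_two, hβb]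
    have h2 : β ^ 2 ≤ ‖a + b‖ ^ 2 := by nlinarith [habβ, hβ0]
    have h3 : (2:ℝ) * β ^ 3 ≤ 2 * β * ‖a + b‖ ^ 2 := by nlinarith [h2, hβ0]
    exact inv_anti₀ (by positivity) h3
  have hab : ‖a - b‖ ≤ β⁻¹ := by
    rw [heq1, norm_inv]
    exact inv_anti₀ hβ0 habβ
  have hrw1 : (‖z‖)⁻¹ = (β * β)⁻¹ := by rw [hβsq]
  have hrw2 : ((‖z‖) ^ 2)⁻¹ = ((β * β) ^ 2)⁻¹ := by rw [hβsq]
  have hY2 : ‖(a - b) * (Ac * T)‖ ≤ β⁻¹ * (M * (β * β)⁻¹) := by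
    rw [norm_mul]
    refine mul_le_mul hab ?_ (norm_nonneg _) (by positivity)
    rw [← hrw1]; exact hTbound
  have hZ2 : ‖b * (Ac * T2)‖ ≤ β * (M * ((β * β) ^ 2)⁻¹) := by
    rw [norm_mul, hβb]
    refine mul_le_mul_of_nonneg_left ?_ (by positivity)
    rw [← hrw2]; exact hT2bound
  have hβ3 : β ^ 3 = ‖z‖ ^ ((3:ℝ)/2) := by
    rw [hβdef, ← Real.rpow_natCast (‖z‖ ^ ((1:ℝ)/2)) 3, ← Real.rpow_mul habs0.le]
    norm_num
  have hrhs : (‖z‖) ^ (-(3:ℝ)/2) = (β ^ 3)⁻¹ := by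
    rw [hβ3, ← Real.rpow_neg habs0.le]
    norm_num
  have harith : (2 * β ^ 3)⁻¹ + β⁻¹ * (M * (β * β)⁻¹) + β * (M * ((β * β) ^ 2)⁻¹)
      ≤ (1 + 2 * M) * (β ^ 3)⁻¹ := by
    have hβne : β ≠ 0 := ne_of_gt hβ0
    have e2 : ∀ m : ℝ, β⁻¹ * (m * (β * β)⁻¹) = m * (β ^ 3)⁻¹ := by
      intro m; ring
    have e3 : ∀ m : ℝ, β * (m * ((β * β) ^ 2)⁻¹) = m * (β ^ 3)⁻¹ := by
      intro m
      rw [show ((β * β) ^ 2 : ℝ) = β * β ^ 3 by ring, mul_inv,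
        show (β:ℝ) * (m * (β⁻¹ * (β ^ 3)⁻¹)) = (β * β⁻¹) * (m * (β ^ 3)⁻¹) by ring,
        mul_inv_cancel₀ hβne, one_mul]
    have e1 : (2 * β ^ 3)⁻¹ ≤ (β ^ 3)⁻¹ := by
      apply inv_anti₀ (by positivity)
      nlinarith
    rw [e2 M, e3 M]
    have ht : (0:ℝ) ≤ (β ^ 3)⁻¹ := by positivity
    nlinarith [e1, hM0, ht]
  calc ‖gFun k lam s c z - b
        - (((1 / 2 + (-1 : ℝ) ^ (k + 1) * lam ^ k * c 1 / s ^ ((k : ℝ) + 1 / 2) : ℝ)) : ℂ)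
          * z ^ (-(1 : ℂ) / 2)‖
      = ‖(a - b - (2 * b)⁻¹) + (a - b) * (Ac * T) + b * (Ac * T2)‖ := by
        rw [hEiden]
    _ ≤ ‖(a - b - (2 * b)⁻¹) + (a - b) * (Ac * T)‖ + ‖b * (Ac * T2)‖ :=
        norm_add_le _ _
    _ ≤ (‖a - b - (2 * b)⁻¹‖ + ‖(a - b) * (Ac * T)‖)
          + ‖b * (Ac * T2)‖ := by
        exact add_le_add_left (norm_add_le _ _) _
    _ ≤ (2 * β ^ 3)⁻¹ + β⁻¹ * (M * (β * β)⁻¹) + β * (M * ((β * β) ^ 2)⁻¹) := by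
        exact add_le_add (add_le_add hX hY2) hZ2
    _ ≤ (1 + 2 * M) * (β ^ 3)⁻¹ := harith
    _ = (1 + 2 * M) * (‖z‖) ^ (-(3:ℝ)/2) := by rw [hrhs]
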